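/- For all α, β, γ > 0, b₀(γ,β,α)·θ_log(γ,β) + b₀(α,β,γ)·θ_log(α,β) ≥ θ_log(α,β)² + θ_log(γ,β)², where b₀(α,β,γ) := ∂₁θ_log(β,γ)·α + ∂₂θ_log(β,γ)·β. -/

import Mathlib

open Real MeasureTheory intervalIntegral Metric

noncomputable def thetaLog (r s : ℝ) : ℝ := ∫ p in (0:ℝ)..1, r ^ (1 - p) * s ^ p

noncomputable def dtheta1 (r s : ℝ) : ℝ := deriv (fun u : ℝ => thetaLog u s) r

noncomputable def dtheta2 (r s : ℝ) : ℝ := deriv (fun v : ℝ => thetaLog r v) s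

noncomputable def bfun (a b c : ℝ) : ℝ := dtheta1 b c * a + dtheta2 b c * b - thetaLog a b

noncomputable def b0fun (a b c : ℝ) : ℝ := dtheta1 b c * a + dtheta2 b c * b

lemma contRpowBase {r : ℝ} (hr : 0 < r) {f : ℝ → ℝ} (hf : Continuous f) :
    Continuous fun p => r ^ f p := by
  have h : (fun p => r ^ f p) = fun p => Real.exp (Real.log r * f p) := by
    funext p; rw [Real.rpow_def_of_pos hr]
  rw [h]; exact Real.continuous_exp.comp (continuous_const.mul hf)

lemma hasDeriv1 {r s : ℝ} (hr : 0 < r) (hs : 0 < s) :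
    HasDerivAt (fun u : ℝ => thetaLog u s)
      (∫ p in (0:ℝ)..1, (1 - p) * r ^ (-p) * s ^ p) r := by
  have hball : ∀ x ∈ ball r (r / 2), r / 2 < x := by
    intro x hx
    have := abs_lt.1 (mem_ball_iff_norm.1 hx)
    linarith [this.1]
  have key := intervalIntegral.hasDerivAt_integral_of_dominated_loc_of_deriv_le
    (F := fun x t => x ^ (1 - t) * s ^ t)
    (F' := fun x t => (1 - t) * x ^ (-t) * s ^ t)
    (x₀ := r) (a := (0:ℝ)) (b := 1) (μ := volume)
    (bound := fun t => (r / 2) ^ (-t) * s ^ t)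
    (Metric.ball_mem_nhds _ (half_pos hr))
    (by
      filter_upwards [eventually_gt_nhds hr] with x hx0
      exact ((contRpowBase hx0 (by fun_prop)).mul
        (contRpowBase hs continuous_id)).aestronglyMeasurable)
    (((contRpowBase hr (by fun_prop)).mul (contRpowBase hs continuous_id)).intervalIntegrable _ _)
    (((((continuous_const.sub continuous_id).mul (contRpowBase hr (by fun_prop))).mul
        (contRpowBase hs continuous_id))).aestronglyMeasurable)
    (Filter.Eventually.of_forall fun t ht x hx => by
      have hx2 : r / 2 < x := hball x hx
      have hx0 : 0 < x := lt_trans (half_pos hr) hx2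
      rw [Set.uIoc_of_le (by norm_num : (0:ℝ) ≤ 1)] at ht
      have ht0 : 0 < t := ht.1
      have ht1 : t ≤ 1 := ht.2
      have h1 : x ^ (-t) ≤ (r / 2) ^ (-t) := by
        rw [Real.rpow_neg hx0.le, Real.rpow_neg (half_pos hr).le]
        exact inv_anti₀ (Real.rpow_pos_of_pos (half_pos hr) t)
          (Real.rpow_le_rpow (half_pos hr).le hx2.le ht0.le)
      have h2 : (0:ℝ) ≤ s ^ t := (Real.rpow_pos_of_pos hs t).le
      have h3 : (0:ℝ) ≤ x ^ (-t) := (Real.rpow_pos_of_pos hx0 (-t)).le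
      rw [Real.norm_eq_abs, abs_mul, abs_mul, abs_of_nonneg (by linarith : (0:ℝ) ≤ 1 - t),
        abs_of_nonneg h3, abs_of_nonneg h2]
      calc (1 - t) * x ^ (-t) * s ^ t ≤ 1 * ((r/2) ^ (-t)) * s ^ t := by
            apply mul_le_mul_of_nonneg_right _ h2
            exact mul_le_mul (by linarith) h1 h3 zero_le_one
        _ = (r / 2) ^ (-t) * s ^ t := by ring)
    (((contRpowBase (half_pos hr) (by fun_prop)).mul
      (contRpowBase hs continuous_id)).intervalIntegrable _ _)
    (Filter.Eventually.of_forall fun t ht x hx => by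
      have hx0 : 0 < x := lt_trans (half_pos hr) (hball x hx)
      have h := (Real.hasDerivAt_rpow_const (p := 1 - t) (Or.inl hx0.ne')).mul_const (s ^ t)
      have e : (1 : ℝ) - t - 1 = -t := by ring
      rw [e] at h
      exact h)
  have : thetaLog r s = ∫ t in (0:ℝ)..1, r ^ (1 - t) * s ^ t := rfl
  simpa [thetaLog] using key.2

lemma hasDeriv2 {r s : ℝ} (hr : 0 < r) (hs : 0 < s) :
    HasDerivAt (fun v : ℝ => thetaLog r v)
      (∫ p in (0:ℝ)..1, r ^ (1 - p) * (p * s ^ (p - 1))) s := by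
  have hball : ∀ x ∈ ball s (s / 2), s / 2 < x := by
    intro x hx
    have := abs_lt.1 (mem_ball_iff_norm.1 hx)
    linarith [this.1]
  have key := intervalIntegral.hasDerivAt_integral_of_dominated_loc_of_deriv_le
    (F := fun x t => r ^ (1 - t) * x ^ t)
    (F' := fun x t => r ^ (1 - t) * (t * x ^ (t - 1)))
    (x₀ := s) (a := (0:ℝ)) (b := 1) (μ := volume)
    (bound := fun t => r ^ (1 - t) * (s / 2) ^ (t - 1))
    (Metric.ball_mem_nhds _ (half_pos hs))
    (by
      filter_upwards [eventually_gt_nhds hs] with x hx0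
      exact ((contRpowBase hr (by fun_prop)).mul
        (contRpowBase hx0 continuous_id)).aestronglyMeasurable)
    (((contRpowBase hr (by fun_prop)).mul (contRpowBase hs continuous_id)).intervalIntegrable _ _)
    (((contRpowBase hr (by fun_prop)).mul
        (continuous_id.mul (contRpowBase hs (by fun_prop)))).aestronglyMeasurable)
    (Filter.Eventually.of_forall fun t ht x hx => by
      have hx2 : s / 2 < x := hball x hx
      have hx0 : 0 < x := lt_trans (half_pos hs) hx2
      rw [Set.uIoc_of_le (by norm_num : (0:ℝ) ≤ 1)] at ht
      have ht0 : 0 < t := ht.1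
      have ht1 : t ≤ 1 := ht.2
      have h1 : x ^ (t - 1) ≤ (s / 2) ^ (t - 1) := by
        have e : t - 1 = -(1 - t) := by ring
        rw [e, Real.rpow_neg hx0.le, Real.rpow_neg (half_pos hs).le]
        exact inv_anti₀ (Real.rpow_pos_of_pos (half_pos hs) (1 - t))
          (Real.rpow_le_rpow (half_pos hs).le hx2.le (by linarith))
      have h2 : (0:ℝ) ≤ r ^ (1 - t) := (Real.rpow_pos_of_pos hr _).le
      have h3 : (0:ℝ) ≤ x ^ (t - 1) := (Real.rpow_pos_of_pos hx0 _).le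
      rw [Real.norm_eq_abs, abs_mul, abs_mul, abs_of_nonneg h2, abs_of_nonneg ht0.le,
        abs_of_nonneg h3]
      apply mul_le_mul_of_nonneg_left _ h2
      calc t * x ^ (t - 1) ≤ 1 * ((s/2) ^ (t - 1)) := mul_le_mul ht1 h1 h3 zero_le_one
        _ = (s / 2) ^ (t - 1) := one_mul _)
    (((contRpowBase hr (by fun_prop)).mul
      (contRpowBase (half_pos hs) (by fun_prop))).intervalIntegrable _ _)
    (Filter.Eventually.of_forall fun t ht x hx => by
      have hx0 : 0 < x := lt_trans (half_pos hs) (hball x hx)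
      exact (Real.hasDerivAt_rpow_const (p := t) (Or.inl hx0.ne')).const_mul (r ^ (1 - t)))
  simpa [thetaLog] using key.2

lemma dtheta1_eq {r s : ℝ} (hr : 0 < r) (hs : 0 < s) :
    dtheta1 r s = ∫ p in (0:ℝ)..1, (1 - p) * r ^ (-p) * s ^ p :=
  (hasDeriv1 hr hs).deriv

lemma dtheta2_eq {r s : ℝ} (hr : 0 < r) (hs : 0 < s) :
    dtheta2 r s = ∫ p in (0:ℝ)..1, r ^ (1 - p) * (p * s ^ (p - 1)) :=
  (hasDeriv2 hr hs).deriv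

lemma theta_le_b0 {a b c : ℝ} (ha : 0 < a) (hb : 0 < b) (hc : 0 < c) :
    thetaLog a b ≤ b0fun a b c := by
  have hint1 : IntervalIntegrable (fun p : ℝ => (1 - p) * b ^ (-p) * c ^ p * a) volume 0 1 := by
    exact (((continuous_const.sub continuous_id).mul
      (contRpowBase hb (by fun_prop))).mul (contRpowBase hc continuous_id)).mul continuous_const
      |>.intervalIntegrable _ _
  have hint2 : IntervalIntegrable (fun p : ℝ => b ^ (1 - p) * (p * c ^ (p - 1)) * b) volume 0 1 := by
    exact ((contRpowBase hb (by fun_prop)).mul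
      (continuous_id.mul (contRpowBase hc (by fun_prop)))).mul continuous_const
      |>.intervalIntegrable _ _
  have hb0 : b0fun a b c
      = ∫ p in (0:ℝ)..1, ((1 - p) * b ^ (-p) * c ^ p * a + b ^ (1 - p) * (p * c ^ (p - 1)) * b) := by
    rw [b0fun, dtheta1_eq hb hc, dtheta2_eq hb hc, intervalIntegral.integral_add hint1 hint2,
      ← intervalIntegral.integral_mul_const, ← intervalIntegral.integral_mul_const]
  rw [hb0, thetaLog]
  apply intervalIntegral.integral_mono_on (by norm_num)
    (((contRpowBase ha (by fun_prop)).mul (contRpowBase hb continuous_id)).intervalIntegrable _ _)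
    (hint1.add hint2)
  intro p hp
  obtain ⟨hp0, hp1⟩ := hp
  have hX : (0:ℝ) < b ^ (-p) * c ^ p * a := by positivity
  have hY : (0:ℝ) < b ^ (1 - p) * c ^ (p - 1) * b := by positivity
  have hgm := Real.geom_mean_le_arith_mean2_weighted (by linarith : (0:ℝ) ≤ 1 - p) hp0
    hX.le hY.le (by ring)
  have l1 : Real.log (b ^ (-p) * c ^ p * a)
      = -p * Real.log b + p * Real.log c + Real.log a := by
    rw [Real.log_mul (by positivity) ha.ne', Real.log_mul (by positivity) (by positivity),
      Real.log_rpow hb, Real.log_rpow hc]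
  have l2 : Real.log (b ^ (1 - p) * c ^ (p - 1) * b)
      = (1 - p) * Real.log b + (p - 1) * Real.log c + Real.log b := by
    rw [Real.log_mul (by positivity) hb.ne', Real.log_mul (by positivity) (by positivity),
      Real.log_rpow hb, Real.log_rpow hc]
  have heq : (b ^ (-p) * c ^ p * a) ^ (1 - p) * (b ^ (1 - p) * c ^ (p - 1) * b) ^ p
      = a ^ (1 - p) * b ^ p := by
    rw [Real.rpow_def_of_pos hX, Real.rpow_def_of_pos hY, l1, l2, Real.rpow_def_of_pos ha,
      Real.rpow_def_of_pos hb, ← Real.exp_add, ← Real.exp_add]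
    congr 1
    ring
  calc a ^ (1 - p) * b ^ p
      = (b ^ (-p) * c ^ p * a) ^ (1 - p) * (b ^ (1 - p) * c ^ (p - 1) * b) ^ p := heq.symm
    _ ≤ (1 - p) * (b ^ (-p) * c ^ p * a) + p * (b ^ (1 - p) * c ^ (p - 1) * b) := hgm
    _ = (1 - p) * b ^ (-p) * c ^ p * a + b ^ (1 - p) * (p * c ^ (p - 1)) * b := by ring

lemma theta_nonneg {a b : ℝ} (ha : 0 < a) (hb : 0 < b) : 0 ≤ thetaLog a b := by
  apply intervalIntegral.integral_nonneg (by norm_num)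
  intro p _
  positivity

theorem b0_theta_lower_sq (a b c : ℝ) (ha : 0 < a) (hb : 0 < b) (hc : 0 < c) :
    b0fun c b a * thetaLog c b + b0fun a b c * thetaLog a b ≥
      thetaLog a b ^ 2 + thetaLog c b ^ 2 := by
  have h1 := theta_le_b0 hc hb ha
  have h2 := theta_le_b0 ha hb hc
  have h3 := theta_nonneg ha hb
  have h4 := theta_nonneg hc hb
  nlinarith [mul_le_mul_of_nonneg_right h1 h4, mul_le_mul_of_nonneg_right h2 h3]
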